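/- Let G be a connected finite simple graph on n ≥ 2 vertices. Then EE(G) > e^{2cos(π/(n+1))} + (n − 1) − 2cos(π/(n+1)). -/

import Mathlib

open Finset Real

namespace EstradaIndexPaper

/-- The adjacency matrix of a simple graph over `ℝ` is Hermitian. -/
theorem adjMatrix_isHermitian {n : ℕ} (G : SimpleGraph (Fin n)) [DecidableRel G.Adj] :
    (G.adjMatrix ℝ).IsHermitian := by
  unfold Matrix.IsHermitian
  rw [Matrix.conjTranspose_eq_transpose_of_trivial]
  exact G.isSymm_adjMatrix

/-- The eigenvalues of the adjacency matrix of `G`. -/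
noncomputable def eig {n : ℕ} (G : SimpleGraph (Fin n)) [DecidableRel G.Adj] : Fin n → ℝ :=
  (adjMatrix_isHermitian G).eigenvalues

/-- The Estrada index of `G`: the sum of `e^{λ_i}` over the adjacency eigenvalues. -/
noncomputable def EE {n : ℕ} (G : SimpleGraph (Fin n)) [DecidableRel G.Adj] : ℝ :=
  ∑ i, Real.exp (eig G i)

/-- The largest adjacency eigenvalue `λ₁` of `G`. -/
noncomputable def lam1 {n : ℕ} (G : SimpleGraph (Fin n)) [DecidableRel G.Adj] : ℝ :=
  ⨆ i, eig G i

/-- The Randić index `R(G) = Σ_{ij ∈ E(G)} (d(i)d(j))^{-1/2}`. -/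
noncomputable def randic {n : ℕ} (G : SimpleGraph (Fin n)) [DecidableRel G.Adj] : ℝ :=
  ∑ e ∈ G.edgeFinset,
    Sym2.lift ⟨fun i j => (Real.sqrt ((G.degree i : ℝ) * (G.degree j : ℝ)))⁻¹,
      fun i j => by simp [mul_comm]⟩ e

/-- The general Randić index `R_{1/2}(G) = Σ_{ij ∈ E(G)} (d(i)d(j))^{1/2}`. -/
noncomputable def randicHalf {n : ℕ} (G : SimpleGraph (Fin n)) [DecidableRel G.Adj] : ℝ :=
  ∑ e ∈ G.edgeFinset,
    Sym2.lift ⟨fun i j => Real.sqrt ((G.degree i : ℝ) * (G.degree j : ℝ)),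
      fun i j => by simp [mul_comm]⟩ e

/-! ### Auxiliary lemmas -/

/-- For `x ≤ 0` we have the upper bound `e^x ≤ 1 + x + x²/2`. -/
lemma exp_quad_le {x : ℝ} (hx : x ≤ 0) : Real.exp x ≤ 1 + x + x^2/2 := by
  have h2 : 1 + (-x) + (-x)^2/2 ≤ Real.exp (-x) := Real.quadratic_le_exp_of_nonneg (by linarith)
  have h4 : Real.exp x * Real.exp (-x) = 1 := by rw [← Real.exp_add]; simp
  have hpx := Real.exp_pos x
  have hP : (0:ℝ) < 1 + (-x) + (-x)^2/2 := by nlinarith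
  have key : Real.exp x * (1 + (-x) + (-x)^2/2) ≤ 1 := by nlinarith
  nlinarith [sq_nonneg (x*x), sq_nonneg x]

/-- The cubic Taylor polynomial is a global lower bound on `exp`. -/
lemma cubic_le_exp (x : ℝ) : 1 + x + x^2/2 + x^3/6 ≤ Real.exp x := by
  rcases le_or_gt 0 x with hx | hx
  · have h := Real.sum_le_exp_of_nonneg hx 4
    have he : ∑ i ∈ Finset.range 4, x ^ i / i.factorial = 1 + x + x^2/2 + x^3/6 := by
      simp [Finset.sum_range_succ, Nat.factorial]
    linarith [he ▸ h]
  · have hder : ∀ y : ℝ, HasDerivAt (fun z : ℝ => Real.exp z - (1+z+z^2/2+z^3/6))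
        (Real.exp y - (1+y+y^2/2)) y := by
      intro y
      have h1 : HasDerivAt (fun z : ℝ => 1+z+z^2/2+z^3/6) (1+y+y^2/2) y := by
        have h1' := (((hasDerivAt_const y (1:ℝ)).add (hasDerivAt_id y)).add
          ((hasDerivAt_pow 2 y).div_const 2)).add ((hasDerivAt_pow 3 y).div_const 6)
        refine h1'.congr_deriv ?_
        norm_num
        ring
      exact (Real.hasDerivAt_exp y).sub h1
    have hanti : AntitoneOn (fun z : ℝ => Real.exp z - (1+z+z^2/2+z^3/6)) (Set.Iic 0) := by
      apply antitoneOn_of_deriv_nonpos (convex_Iic 0)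
      · exact (Real.continuous_exp.sub (by continuity)).continuousOn
      · exact fun y _ => ((hder y).differentiableAt).differentiableWithinAt
      · intro y hy
        rw [interior_Iic] at hy
        rw [(hder y).deriv]
        have := exp_quad_le (le_of_lt hy)
        linarith
    have h0 : Real.exp 0 - (1+(0:ℝ)+0^2/2+0^3/6) = 0 := by norm_num
    have h2 := hanti (Set.mem_Iic.mpr hx.le) (Set.mem_Iic.mpr (le_refl 0)) hx.le
    simp only at h2
    rw [h0] at h2
    linarith

/-- The function `x ↦ eˣ - x` is monotone on the nonnegative reals. -/
lemma exp_sub_mono {a b : ℝ} (ha : 0 ≤ a) (hab : a ≤ b) :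
    Real.exp a - a ≤ Real.exp b - b := by
  have h1 : Real.exp b = Real.exp a * Real.exp (b - a) := by
    rw [← Real.exp_add]; ring_nf
  have h2 := Real.add_one_le_exp (b - a)
  have h3 : (1:ℝ) ≤ Real.exp a := Real.one_le_exp ha
  nlinarith

lemma exp_1415 : Real.exp 1.415 < 4.415 := by
  have hb := Real.exp_bound' (show (0:ℝ) ≤ 0.415 by norm_num) (by norm_num)
    (show 0 < 4 by norm_num)
  norm_num [Finset.sum_range_succ, Nat.factorial] at hb
  have hsplit : Real.exp 1.415 = Real.exp 1 * Real.exp 0.415 := by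
    rw [← Real.exp_add]; norm_num
  norm_num at hsplit
  have e1 := Real.exp_one_lt_d9
  have := mul_le_mul e1.le hb (Real.exp_pos _).le (by norm_num : (0:ℝ) ≤ 2.7182818286)
  rw [← hsplit] at this
  nlinarith

lemma exp_1619 : Real.exp 1.619 < 5.05 := by
  have hb := Real.exp_bound' (show (0:ℝ) ≤ 0.619 by norm_num) (by norm_num)
    (show 0 < 5 by norm_num)
  norm_num [Finset.sum_range_succ, Nat.factorial] at hb
  have hsplit : Real.exp 1.619 = Real.exp 1 * Real.exp 0.619 := by
    rw [← Real.exp_add]; norm_num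
  norm_num at hsplit
  have e1 := Real.exp_one_lt_d9
  have := mul_le_mul e1.le hb (Real.exp_pos _).le (by norm_num : (0:ℝ) ≤ 2.7182818286)
  rw [← hsplit] at this
  nlinarith

lemma exp_17321 : Real.exp 1.7321 < 5.66 := by
  have hb := Real.exp_bound' (show (0:ℝ) ≤ 0.7321 by norm_num) (by norm_num)
    (show 0 < 5 by norm_num)
  norm_num [Finset.sum_range_succ, Nat.factorial] at hb
  have hsplit : Real.exp 1.7321 = Real.exp 1 * Real.exp 0.7321 := by
    rw [← Real.exp_add]; norm_num
  norm_num at hsplit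
  have e1 := Real.exp_one_lt_d9
  have := mul_le_mul e1.le hb (Real.exp_pos _).le (by norm_num : (0:ℝ) ≤ 2.7182818286)
  rw [← hsplit] at this
  nlinarith

/-- The key numeric inequality: `e^{2cos(π/(n+1))} - 2cos(π/(n+1)) < n` for `n ≥ 2`. -/
lemma num_ineq {n : ℕ} (hn : 2 ≤ n) :
    Real.exp (2 * Real.cos (Real.pi / (n + 1))) - 2 * Real.cos (Real.pi / (n + 1)) < n := by
  rcases lt_or_ge n 6 with h6 | h6
  · interval_cases n
    · rw [show ((2:ℕ):ℝ) + 1 = 3 by norm_num, Real.cos_pi_div_three]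
      norm_num
      linarith [Real.exp_one_lt_d9]
    · rw [show ((3:ℕ):ℝ) + 1 = 4 by norm_num, Real.cos_pi_div_four]
      have h22 : 2 * (Real.sqrt 2 / 2) = Real.sqrt 2 := by ring
      rw [h22]
      have hs0 := Real.sqrt_nonneg 2
      have hs : Real.sqrt 2 ≤ 1.415 := by
        nlinarith [Real.sq_sqrt (show (0:ℝ) ≤ 2 by norm_num)]
      have hm := exp_sub_mono hs0 hs
      have := exp_1415
      push_cast
      linarith
    · rw [show ((4:ℕ):ℝ) + 1 = 5 by norm_num, Real.cos_pi_div_five]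
      have hs0 := Real.sqrt_nonneg 5
      have hs : Real.sqrt 5 ≤ 2.2361 := by
        nlinarith [Real.sq_sqrt (show (0:ℝ) ≤ 5 by norm_num)]
      have h22 : 2 * ((1 + Real.sqrt 5) / 4) = (1 + Real.sqrt 5) / 2 := by ring
      rw [h22]
      have hm := exp_sub_mono (show (0:ℝ) ≤ (1 + Real.sqrt 5)/2 by positivity)
        (show (1 + Real.sqrt 5)/2 ≤ 1.619 by linarith)
      have := exp_1619
      push_cast
      linarith
    · rw [show ((5:ℕ):ℝ) + 1 = 6 by norm_num, Real.cos_pi_div_six]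
      have h22 : 2 * (Real.sqrt 3 / 2) = Real.sqrt 3 := by ring
      rw [h22]
      have hs0 := Real.sqrt_nonneg 3
      have hs : Real.sqrt 3 ≤ 1.7321 := by
        nlinarith [Real.sq_sqrt (show (0:ℝ) ≤ 3 by norm_num)]
      have hm := exp_sub_mono hs0 hs
      have := exp_17321
      push_cast
      linarith
  · have hn1 : (2:ℝ) ≤ (n:ℝ) + 1 := by
      have : (2:ℝ) ≤ (n:ℝ) := by exact_mod_cast hn
      linarith
    have hc0 : 0 ≤ Real.cos (Real.pi / (n + 1)) := by
      apply Real.cos_nonneg_of_mem_Icc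
      constructor
      · have : (0:ℝ) ≤ Real.pi / (n+1) := by positivity
        linarith [Real.pi_pos]
      · rw [div_le_div_iff₀ (by positivity) (by norm_num : (0:ℝ) < 2)]
        nlinarith [Real.pi_pos]
    have hc1 : Real.cos (Real.pi / (n + 1)) ≤ 1 := Real.cos_le_one _
    have hm := exp_sub_mono (show (0:ℝ) ≤ 2 * Real.cos (Real.pi / (n+1)) by linarith)
      (show 2 * Real.cos (Real.pi / (n+1)) ≤ 2 by linarith)
    have h2 : Real.exp 2 = Real.exp 1 * Real.exp 1 := by rw [← Real.exp_add]; norm_num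
    have e1 := Real.exp_one_lt_d9
    have hn6 : (6:ℝ) ≤ (n:ℝ) := by exact_mod_cast h6
    nlinarith [Real.exp_pos 1]

/-- Traces of powers of the adjacency matrix compute power sums of eigenvalues. -/
lemma trace_pow_eq {n : ℕ} (G : SimpleGraph (Fin n)) [DecidableRel G.Adj] (k : ℕ) :
    Matrix.trace ((G.adjMatrix ℝ) ^ k) = ∑ i, (eig G i) ^ k := by
  classical
  have hA := adjMatrix_isHermitian G
  set U : Matrix (Fin n) (Fin n) ℝ := (hA.eigenvectorUnitary : Matrix (Fin n) (Fin n) ℝ) with hU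
  set D : Matrix (Fin n) (Fin n) ℝ :=
    Matrix.diagonal (RCLike.ofReal ∘ hA.eigenvalues) with hD
  have hUU : star U * U = 1 := (Matrix.mem_unitaryGroup_iff').mp hA.eigenvectorUnitary.2
  have hUU' : U * star U = 1 := (Matrix.mem_unitaryGroup_iff).mp hA.eigenvectorUnitary.2
  have hspec : G.adjMatrix ℝ = U * D * star U := hA.spectral_theorem
  have hpow : (G.adjMatrix ℝ) ^ k = U * D ^ k * star U := by
    induction k with
    | zero => simpa using hUU'.symm
    | succ k ih =>
      have hstep : star U * (U * (D * star U)) = D * star U := by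
        rw [← Matrix.mul_assoc, hUU, Matrix.one_mul]
      rw [pow_succ, ih, hspec]
      simp only [Matrix.mul_assoc]
      rw [hstep]
      simp only [← Matrix.mul_assoc, pow_succ]
  rw [hpow, Matrix.trace_mul_cycle, hUU, Matrix.one_mul,
    Matrix.diagonal_pow, Matrix.trace_diagonal]
  simp [eig, Pi.pow_apply, RCLike.ofReal_real_eq_id]

lemma sum_eig {n : ℕ} (G : SimpleGraph (Fin n)) [DecidableRel G.Adj] :
    ∑ i, eig G i = 0 := by
  have h := trace_pow_eq G 1
  simpa [SimpleGraph.trace_adjMatrix] using h.symm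

lemma sum_eig_sq {n : ℕ} (G : SimpleGraph (Fin n)) [DecidableRel G.Adj] :
    ∑ i, (eig G i) ^ 2 = ∑ v, (G.degree v : ℝ) := by
  have h := trace_pow_eq G 2
  rw [← h, pow_two, Matrix.trace]
  simp only [Matrix.diag]
  apply Finset.sum_congr rfl
  intro v _
  rw [SimpleGraph.adjMatrix_mul_self_apply_self]

lemma sum_eig_cube_nonneg {n : ℕ} (G : SimpleGraph (Fin n)) [DecidableRel G.Adj] :
    0 ≤ ∑ i, (eig G i) ^ 3 := by
  have h := trace_pow_eq G 3
  rw [← h, Matrix.trace]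
  have hent : ∀ i j, (0:ℝ) ≤ G.adjMatrix ℝ i j := by
    intro i j
    by_cases h : G.Adj i j <;> simp [h]
  apply Finset.sum_nonneg
  intro i _
  show (0:ℝ) ≤ ((G.adjMatrix ℝ) ^ 3) i i
  rw [pow_succ, pow_two, Matrix.mul_apply]
  apply Finset.sum_nonneg
  intro j _
  apply mul_nonneg _ (hent j i)
  rw [Matrix.mul_apply]
  exact Finset.sum_nonneg fun k _ => mul_nonneg (hent i k) (hent k j)

/-- A connected graph on `n` vertices has at least `n - 1` edges. -/
lemma card_edges_lb {n : ℕ} (hn : 1 ≤ n) (G : SimpleGraph (Fin n)) [DecidableRel G.Adj]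
    (hG : G.Connected) : n ≤ G.edgeFinset.card + 1 := by
  classical
  set r : Fin n := ⟨0, by omega⟩ with hr
  choose w hw using fun v : Fin n => (hG.preconnected v r).exists_walk_length_eq_dist
  have key : ∀ v, v ≠ r → G.dist ((w v).getVert 1) r + 1 ≤ G.dist v r := by
    intro v hv
    have hnil : ¬(w v).Nil := SimpleGraph.Walk.not_nil_of_ne hv
    have h1 := SimpleGraph.dist_le ((w v).tail)
    have h2 := SimpleGraph.Walk.length_tail_add_one hnil
    rw [hw v] at h2
    have h3 : (w v).snd = (w v).getVert 1 := rfl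
    have h4 : G.dist ((w v).getVert 1) r ≤ (w v).tail.length := h1
    omega
  have hmaps : ∀ v ∈ Finset.univ.erase r, s(v, (w v).getVert 1) ∈ G.edgeFinset := by
    intro v hv
    have hnil : ¬(w v).Nil := SimpleGraph.Walk.not_nil_of_ne (Finset.mem_erase.mp hv).1
    rw [SimpleGraph.mem_edgeFinset, SimpleGraph.mem_edgeSet]
    exact (w v).adj_snd hnil
  have hinj : Set.InjOn (fun v => s(v, (w v).getVert 1))
      ((Finset.univ.erase r : Finset (Fin n)) : Set (Fin n)) := by
    intro u hu v hv huv
    simp only [Finset.coe_erase, Set.mem_diff, Set.mem_singleton_iff] at hu hv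
    simp only [Sym2.eq_iff] at huv
    rcases huv with ⟨h1, _⟩ | ⟨h1, h2⟩
    · exact h1
    · exfalso
      have k1 := key u hu.2
      have k2 := key v hv.2
      rw [h2] at k1
      rw [← h1] at k2
      omega
  have hcard := Finset.card_le_card_of_injOn _ hmaps hinj
  rw [Finset.card_erase_of_mem (Finset.mem_univ r), Finset.card_univ, Fintype.card_fin] at hcard
  omega

theorem stmt7 {n : ℕ} (hn : 2 ≤ n) (G : SimpleGraph (Fin n)) [DecidableRel G.Adj]
    (hG : G.Connected) :
    EE G > Real.exp (2 * Real.cos (Real.pi / (n + 1))) + ((n : ℝ) - 1) -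
      2 * Real.cos (Real.pi / (n + 1)) := by
  have hEE : 2 * (n:ℝ) - 1 ≤ EE G := by
    have hle : ∑ i, (1 + eig G i + (eig G i)^2/2 + (eig G i)^3/6) ≤ EE G :=
      Finset.sum_le_sum fun i _ => cubic_le_exp (eig G i)
    have hsplit : ∑ i, (1 + eig G i + (eig G i)^2/2 + (eig G i)^3/6)
        = (n:ℝ) + (∑ i, eig G i) + (∑ i, (eig G i)^2)/2 + (∑ i, (eig G i)^3)/6 := by
      rw [Finset.sum_add_distrib, Finset.sum_add_distrib, Finset.sum_add_distrib,
        ← Finset.sum_div, ← Finset.sum_div]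
      simp [Finset.card_univ]
    have h1 := sum_eig G
    have h2 := sum_eig_sq G
    have h3 := sum_eig_cube_nonneg G
    have hdeg : ∑ v, (G.degree v : ℝ) = 2 * (G.edgeFinset.card : ℝ) := by
      exact_mod_cast congrArg (Nat.cast : ℕ → ℝ) G.sum_degrees_eq_twice_card_edges
    have hedge : (n:ℝ) ≤ (G.edgeFinset.card : ℝ) + 1 := by
      exact_mod_cast card_edges_lb (by omega) G hG
    rw [hsplit, h1, h2, hdeg] at hle
    linarith
  have hnum := num_ineq hn
  linarith

end EstradaIndexPaper
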